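/- For every POVM (M₁,...,Mᵣ) and every index m, the success probability satisfies ∑ᵢ qᵢ tr(ρᵢ Mᵢ) ≤ q_m + ∑ᵢ ‖(qᵢρᵢ − q_mρ_m)⁺‖₁, where X⁺ denotes the positive part of the self-adjoint operator X. -/

import Mathlib

open scoped ComplexOrder

/-- The operator absolute value `√(AᴴA)` of a matrix. -/
noncomputable def matAbs {n : ℕ} (A : Matrix (Fin n) (Fin n) ℂ) : Matrix (Fin n) (Fin n) ℂ :=
  ((Matrix.posSemidef_conjTranspose_mul_self A).1.eigenvectorUnitary : Matrix (Fin n) (Fin n) ℂ) *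
    Matrix.diagonal ((↑) ∘ (√·) ∘ (Matrix.posSemidef_conjTranspose_mul_self A).1.eigenvalues) *
    (star (Matrix.posSemidef_conjTranspose_mul_self A).1.eigenvectorUnitary : Matrix (Fin n) (Fin n) ℂ)

/-- The trace norm `‖A‖₁ = tr √(AᴴA)`. -/
noncomputable def traceNorm {n : ℕ} (A : Matrix (Fin n) (Fin n) ℂ) : ℝ :=
  ((matAbs A).trace).re

/-- The positive part `A⁺ = (|A| + A)/2` of a self-adjoint matrix `A`, so that
`A = A⁺ - A⁻` with `A⁺, A⁻ ≥ 0`. -/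
noncomputable def matPosPart {n : ℕ} (A : Matrix (Fin n) (Fin n) ℂ) : Matrix (Fin n) (Fin n) ℂ :=
  (2 : ℂ)⁻¹ • (matAbs A + A)

/-- A density operator: positive semidefinite with unit trace. -/
def IsDensity {n : ℕ} (ρ : Matrix (Fin n) (Fin n) ℂ) : Prop :=
  ρ.PosSemidef ∧ ρ.trace = 1

/-- A POVM with `r` outcomes: positive semidefinite effects summing to the identity. -/
def IsPOVM {n r : ℕ} (M : Fin r → Matrix (Fin n) (Fin n) ℂ) : Prop :=
  (∀ i, (M i).PosSemidef) ∧ ∑ i, M i = 1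

/-- Success probability `∑ i, q i * tr (ρ i * M i)` of a measurement. -/
noncomputable def successProb {n r : ℕ} (q : Fin r → ℝ)
    (ρ M : Fin r → Matrix (Fin n) (Fin n) ℂ) : ℝ :=
  ∑ i, q i * ((ρ i * M i).trace).re

/-- Optimal success probability under minimum-error discrimination. -/
noncomputable def optSuccess {n r : ℕ} (q : Fin r → ℝ)
    (ρ : Fin r → Matrix (Fin n) (Fin n) ℂ) : ℝ :=
  sSup {p | ∃ M, IsPOVM M ∧ p = successProb q ρ M}

open Matrix in
lemma psd_trace_re_nonneg {k : ℕ} {A : Matrix (Fin k) (Fin k) ℂ} (hA : A.PosSemidef) :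
    0 ≤ A.trace.re := by
  have h : ∀ i, 0 ≤ (A i i).re := by
    intro i
    have := hA.re_dotProduct_nonneg (Pi.single i 1)
    simpa [dotProduct, Matrix.mulVec, Pi.single_apply, Finset.sum_ite_eq,
      Finset.sum_ite_eq'] using this
  simpa [Matrix.trace, Matrix.diag, Complex.re_sum] using Finset.sum_nonneg (fun i _ => h i)

open scoped MatrixOrder in
lemma matAbs_eq_sqrt {n : ℕ} (A : Matrix (Fin n) (Fin n) ℂ) :
    matAbs A = CFC.sqrt (A.conjTranspose * A) := by
  rw [CFC.sqrt_eq_cfc, cfc_nnreal_eq_real _ _ (Matrix.posSemidef_conjTranspose_mul_self A).nonneg, (Matrix.posSemidef_conjTranspose_mul_self A).1.cfc_eq,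
    Matrix.IsHermitian.cfc, Unitary.conjStarAlgAut_apply, matAbs]
  congr 3
  funext x
  simp only [Function.comp_apply, Real.sqrt]
  rfl

open scoped MatrixOrder in
open Matrix in
lemma psd_trace_mul_re_nonneg {k : ℕ} {A B : Matrix (Fin k) (Fin k) ℂ}
    (hA : A.PosSemidef) (hB : B.PosSemidef) : 0 ≤ ((A * B).trace).re := by
  have hS : (CFC.sqrt A).PosSemidef := (CFC.sqrt_nonneg A).posSemidef
  have key : (CFC.sqrt A * B * CFC.sqrt A).PosSemidef := by
    have := hB.mul_mul_conjTranspose_same (CFC.sqrt A)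
    rwa [hS.1.eq] at this
  have htr : (A * B).trace = (CFC.sqrt A * B * CFC.sqrt A).trace := by
    conv_lhs => rw [← CFC.sqrt_mul_sqrt_self A hA.nonneg]
    rw [Matrix.trace_mul_cycle, Matrix.trace_mul_cycle]
  rw [htr]
  exact psd_trace_re_nonneg key

open Matrix in
lemma smul_conj {k : ℕ} (c : ℂ) (U D : Matrix (Fin k) (Fin k) ℂ) :
    c • (U * D * star U) = U * (c • D) * star U := by
  rw [Matrix.mul_smul, Matrix.smul_mul]

open Matrix in
lemma diag_real_herm {k : ℕ} (d : Fin k → ℝ) :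
    (Matrix.diagonal (fun i => ((d i : ℝ) : ℂ))).IsHermitian := by
  apply Matrix.isHermitian_diagonal_of_self_adjoint
  show star _ = _
  funext i
  simp [Pi.star_apply, Complex.star_def, Complex.conj_ofReal]

open Matrix in
lemma conj_diag_psd {k : ℕ} (d : Fin k → ℝ) (hd : ∀ i, 0 ≤ d i)
    (U : Matrix (Fin k) (Fin k) ℂ) :
    (U * Matrix.diagonal (fun i => ((d i : ℝ) : ℂ)) * star U).PosSemidef := by
  rw [Matrix.star_eq_conjTranspose]
  exact (Matrix.posSemidef_diagonal_iff.mpr fun i =>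
    Complex.zero_le_real.mpr (hd i)).mul_mul_conjTranspose_same U

open Matrix in
lemma conj_mul_conj {k : ℕ} {U : Matrix (Fin k) (Fin k) ℂ}
    (hU : U ∈ Matrix.unitaryGroup (Fin k) ℂ) (D E : Matrix (Fin k) (Fin k) ℂ) :
    (U * D * star U) * (U * E * star U) = U * (D * E) * star U := by
  have h : star U * U = 1 := (Matrix.mem_unitaryGroup_iff').mp hU
  calc (U * D * star U) * (U * E * star U)
      = U * D * (star U * U) * E * star U := by noncomm_ring
    _ = U * (D * E) * star U := by rw [h]; noncomm_ring

open Matrix in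
lemma exists_spectral {k : ℕ} {A : Matrix (Fin k) (Fin k) ℂ} (hA : A.IsHermitian) :
    ∃ (U : Matrix (Fin k) (Fin k) ℂ) (d : Fin k → ℝ), U ∈ Matrix.unitaryGroup (Fin k) ℂ ∧
      A = U * Matrix.diagonal (fun i => ((d i : ℝ) : ℂ)) * star U :=
  ⟨_, hA.eigenvalues, hA.eigenvectorUnitary.2, hA.spectral_theorem⟩

open scoped MatrixOrder in
open Matrix in
lemma matAbs_conj_diag {k : ℕ} {U : Matrix (Fin k) (Fin k) ℂ}
    (hU : U ∈ Matrix.unitaryGroup (Fin k) ℂ) (d : Fin k → ℝ) :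
    matAbs (U * Matrix.diagonal (fun i => ((d i : ℝ) : ℂ)) * star U)
      = U * Matrix.diagonal (fun i => ((|d i| : ℝ) : ℂ)) * star U := by
  have hAherm : (U * Matrix.diagonal (fun i => ((d i : ℝ) : ℂ)) * star U).IsHermitian := by
    rw [Matrix.star_eq_conjTranspose]
    exact Matrix.isHermitian_mul_mul_conjTranspose U (diag_real_herm d)
  have hBpsd : (U * Matrix.diagonal (fun i => ((|d i| : ℝ) : ℂ)) * star U).PosSemidef :=
    conj_diag_psd _ (fun i => abs_nonneg _) U
  have hDD : (Matrix.diagonal (fun i => ((|d i| : ℝ) : ℂ)) * Matrix.diagonal (fun i => ((|d i| : ℝ) : ℂ)) : Matrix (Fin k) (Fin k) ℂ)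
      = Matrix.diagonal (fun i => ((d i : ℝ) : ℂ)) * Matrix.diagonal (fun i => ((d i : ℝ) : ℂ)) := by
    rw [Matrix.diagonal_mul_diagonal, Matrix.diagonal_mul_diagonal]
    have hfun : (fun i => ((|d i| : ℝ) : ℂ) * ((|d i| : ℝ) : ℂ))
        = fun i => ((d i : ℝ) : ℂ) * ((d i : ℝ) : ℂ) := by
      funext i
      rw [← Complex.ofReal_mul, ← Complex.ofReal_mul, abs_mul_abs_self]
    rw [hfun]
  have hsq : (U * Matrix.diagonal (fun i => ((|d i| : ℝ) : ℂ)) * star U) ^ 2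
      = (U * Matrix.diagonal (fun i => ((d i : ℝ) : ℂ)) * star U)ᴴ
        * (U * Matrix.diagonal (fun i => ((d i : ℝ) : ℂ)) * star U) := by
    rw [hAherm.eq, pow_two, conj_mul_conj hU, conj_mul_conj hU, hDD]
  rw [matAbs_eq_sqrt]
  exact CFC.sqrt_unique ((pow_two _).symm.trans hsq) hBpsd.nonneg

open Matrix in
lemma matPosPart_conj_diag {k : ℕ} {U : Matrix (Fin k) (Fin k) ℂ}
    (hU : U ∈ Matrix.unitaryGroup (Fin k) ℂ) (d : Fin k → ℝ) :
    matPosPart (U * Matrix.diagonal (fun i => ((d i : ℝ) : ℂ)) * star U)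
      = U * Matrix.diagonal (fun i => ((max (d i) 0 : ℝ) : ℂ)) * star U := by
  rw [matPosPart, matAbs_conj_diag hU]
  rw [← Matrix.add_mul, ← Matrix.mul_add, Matrix.diagonal_add, smul_conj,
    ← Matrix.diagonal_smul]
  have hfun : ((2:ℂ)⁻¹ • fun i => ((|d i| : ℝ) : ℂ) + ((d i : ℝ) : ℂ))
      = fun i => ((max (d i) 0 : ℝ) : ℂ) := by
    funext i
    simp only [Pi.smul_apply, smul_eq_mul]
    rw [← Complex.ofReal_add, show (2:ℂ)⁻¹ = ((2⁻¹ : ℝ) : ℂ) by norm_num, ← Complex.ofReal_mul]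
    congr 1
    rcases le_total (d i) 0 with h | h
    · rw [abs_of_nonpos h, max_eq_right h]; ring
    · rw [abs_of_nonneg h, max_eq_left h]; ring
  rw [hfun]

open scoped MatrixOrder in
open Matrix in
lemma matAbs_of_psd {k : ℕ} {P : Matrix (Fin k) (Fin k) ℂ} (hP : P.PosSemidef) :
    matAbs P = P := by
  rw [matAbs_eq_sqrt]
  exact CFC.sqrt_unique (by rw [hP.1.eq]) hP.nonneg

open Matrix in
lemma matPosPart_psd {k : ℕ} {A : Matrix (Fin k) (Fin k) ℂ} (hA : A.IsHermitian) :
    (matPosPart A).PosSemidef := by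
  obtain ⟨U, d, hU, hrep⟩ := exists_spectral hA
  rw [hrep, matPosPart_conj_diag hU]
  exact conj_diag_psd _ (fun i => le_max_right _ _) U

open Matrix in
lemma matPosPart_sub_psd {k : ℕ} {A : Matrix (Fin k) (Fin k) ℂ} (hA : A.IsHermitian) :
    (matPosPart A - A).PosSemidef := by
  obtain ⟨U, d, hU, hrep⟩ := exists_spectral hA
  rw [hrep, matPosPart_conj_diag hU]
  have key : U * Matrix.diagonal (fun i => ((max (d i) 0 : ℝ) : ℂ)) * star U
      - U * Matrix.diagonal (fun i => ((d i : ℝ) : ℂ)) * star U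
      = U * Matrix.diagonal (fun i => ((max (d i) 0 - d i : ℝ) : ℂ)) * star U := by
    rw [← Matrix.sub_mul, ← Matrix.mul_sub, Matrix.diagonal_sub]
    have hfun : (fun i => ((max (d i) 0 : ℝ) : ℂ) - ((d i : ℝ) : ℂ))
        = fun i => ((max (d i) 0 - d i : ℝ) : ℂ) := by
      funext i
      rw [Complex.ofReal_sub]
    rw [hfun]
  rw [key]
  exact conj_diag_psd _ (fun i => by simp [sub_nonneg, le_max_left]) U

open Matrix in
lemma trace_mul_le_traceNorm {k : ℕ} {X Y : Matrix (Fin k) (Fin k) ℂ}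
    (hX : X.IsHermitian) (hY : Y.PosSemidef) (hY1 : ((1 : Matrix (Fin k) (Fin k) ℂ) - Y).PosSemidef) :
    ((X * Y).trace).re ≤ traceNorm (matPosPart X) := by
  have hP : (matPosPart X).PosSemidef := matPosPart_psd hX
  have h1 : 0 ≤ (((matPosPart X - X) * Y).trace).re :=
    psd_trace_mul_re_nonneg (matPosPart_sub_psd hX) hY
  have h2 : 0 ≤ ((matPosPart X * ((1 : Matrix (Fin k) (Fin k) ℂ) - Y)).trace).re :=
    psd_trace_mul_re_nonneg hP hY1
  rw [Matrix.sub_mul, Matrix.trace_sub, Complex.sub_re] at h1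
  rw [Matrix.mul_sub, Matrix.mul_one, Matrix.trace_sub, Complex.sub_re] at h2
  have h3 : traceNorm (matPosPart X) = (matPosPart X).trace.re := by
    rw [traceNorm, matAbs_of_psd hP]
  linarith

theorem stmt4 {n r : ℕ} (ρ M : Fin r → Matrix (Fin n) (Fin n) ℂ)
    (q : Fin r → ℝ) (hρ : ∀ i, IsDensity (ρ i)) (hq : ∀ i, 0 < q i)
    (hq1 : ∑ i, q i = 1) (hM : IsPOVM M) (m : Fin r) :
    successProb q ρ M
      ≤ q m + ∑ i, traceNorm (matPosPart ((q i : ℂ) • ρ i - (q m : ℂ) • ρ m)) := by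
  obtain ⟨hMpsd, hMsum⟩ := hM
  set X : Fin r → Matrix (Fin n) (Fin n) ℂ :=
    fun i => (q i : ℂ) • ρ i - (q m : ℂ) • ρ m with hXdef
  have hXh : ∀ i, (X i).IsHermitian := by
    intro i
    have hsm : ∀ (c : ℝ) (A : Matrix (Fin n) (Fin n) ℂ), A.IsHermitian →
        ((c : ℂ) • A).IsHermitian := by
      intro c A hA
      rw [Matrix.IsHermitian, Matrix.conjTranspose_smul, hA.eq]
      congr 1
      simp [Complex.star_def, Complex.conj_ofReal]
    exact Matrix.IsHermitian.sub (hsm _ _ (hρ i).1.1) (hsm _ _ (hρ m).1.1)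
  have hM1 : ∀ i, ((1 : Matrix (Fin n) (Fin n) ℂ) - M i).PosSemidef := by
    intro i
    have h : (1 : Matrix (Fin n) (Fin n) ℂ) - M i = ∑ j ∈ Finset.univ.erase i, M j := by
      rw [← hMsum, ← Finset.add_sum_erase _ M (Finset.mem_univ i)]
      abel
    rw [h]
    exact Finset.sum_induction _ _ (fun a b ha hb => ha.add hb)
      Matrix.PosSemidef.zero (fun j _ => hMpsd j)
  have hsplit : ∀ i, q i * ((ρ i * M i).trace).re
      = ((X i * M i).trace).re + q m * ((ρ m * M i).trace).re := by
    intro i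
    have hXM : X i * M i = (q i : ℂ) • (ρ i * M i) - (q m : ℂ) • (ρ m * M i) := by
      show ((q i : ℂ) • ρ i - (q m : ℂ) • ρ m) * M i = _
      rw [Matrix.sub_mul, Matrix.smul_mul, Matrix.smul_mul]
    rw [hXM, Matrix.trace_sub, Matrix.trace_smul, Matrix.trace_smul]
    simp only [smul_eq_mul, Complex.sub_re, Complex.re_ofReal_mul]
    ring
  have hsum2 : ∑ i, ((ρ m * M i).trace).re = 1 := by
    have htr : ∑ i, (ρ m * M i).trace = (ρ m).trace := by
      rw [← Matrix.trace_sum, ← Finset.mul_sum, hMsum, Matrix.mul_one]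
    calc ∑ i, ((ρ m * M i).trace).re
        = (∑ i, (ρ m * M i).trace).re := (Complex.re_sum _ _).symm
      _ = ((ρ m).trace).re := by rw [htr]
      _ = 1 := by rw [(hρ m).2]; simp
  have hmain : successProb q ρ M = (∑ i, ((X i * M i).trace).re) + q m := by
    rw [successProb]
    calc ∑ i, q i * ((ρ i * M i).trace).re
        = ∑ i, (((X i * M i).trace).re + q m * ((ρ m * M i).trace).re) :=
          Finset.sum_congr rfl (fun i _ => hsplit i)
      _ = (∑ i, ((X i * M i).trace).re) + q m * ∑ i, ((ρ m * M i).trace).re := by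
          rw [Finset.sum_add_distrib, Finset.mul_sum]
      _ = _ := by rw [hsum2]; ring
  rw [hmain]
  have hbound : ∑ i, ((X i * M i).trace).re ≤ ∑ i, traceNorm (matPosPart (X i)) :=
    Finset.sum_le_sum (fun i _ => trace_mul_le_traceNorm (hXh i) (hMpsd i) (hM1 i))
  have hXsame : ∀ i, matPosPart (X i)
      = matPosPart ((q i : ℂ) • ρ i - (q m : ℂ) • ρ m) := fun i => rfl
  simp only [← hXsame] at *
  linarith [hbound]
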